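/- For every integer k ≥ 1 and every integer s ≥ 1, if a k-uniform [1,s]-almost intersecting multihypergraph F has exactly s·(2k choose k) edges (counted with multiplicity), then F is [s,s]-almost intersecting, i.e. every edge of F is disjoint from exactly s edges of F counted with multiplicity. -/

import Mathlib

open Finset

lemma st2_sort_key {n : ℕ} (g : Fin n → ℕ) :
    ∃ σ : Equiv.Perm (Fin n), ∀ x y, g x < g y → σ x < σ y := by
  refine ⟨(Tuple.sort g)⁻¹, fun x y hxy => ?_⟩
  rcases lt_trichotomy ((Tuple.sort g)⁻¹ x) ((Tuple.sort g)⁻¹ y) with h | h | h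
  · exact h
  · exfalso
    have : x = y := by
      have := congrArg (Tuple.sort g) h
      simpa using this
    subst this
    exact absurd hxy (lt_irrefl _)
  · exfalso
    have hm := Tuple.monotone_sort g h.le
    simp only [Function.comp_apply, Equiv.Perm.inv_def, Equiv.apply_symm_apply] at hm
    omega

lemma st2_card_filter_mono {γ : Type*} (m : Multiset γ) (p q : γ → Prop)
    [DecidablePred p] [DecidablePred q] (h : ∀ x ∈ m, p x → q x) :
    Multiset.card (m.filter p) ≤ Multiset.card (m.filter q) := by
  apply Multiset.card_le_card
  have heq : (m.filter p).filter q = m.filter p :=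
    Multiset.filter_eq_self.mpr fun a ha =>
      h a (Multiset.mem_of_mem_filter ha) (Multiset.of_mem_filter ha)
  calc m.filter p = (m.filter p).filter q := heq.symm
    _ ≤ m.filter q := Multiset.filter_le_filter q (Multiset.filter_le p m)

lemma st2_swap {β γ : Type*} (S : Finset β) (q : β → γ → Prop)
    [∀ b, DecidablePred (q b)] [∀ A, DecidablePred (fun σ => q σ A)] (m : Multiset γ) :
    ∑ σ ∈ S, Multiset.card (m.filter (q σ))
      = (m.map fun A => (S.filter fun σ => q σ A).card).sum := by
  induction m using Multiset.induction with
  | empty => simp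
  | cons a s ih =>
    simp only [Multiset.filter_cons, Multiset.card_add, Multiset.map_cons, Multiset.sum_cons]
    rw [Finset.sum_add_distrib, ih]
    congr 1
    rw [Finset.card_filter]
    apply Finset.sum_congr rfl
    intro σ _
    split_ifs <;> simp

lemma st2_le_sum {γ : Type*} (m : Multiset γ) (g : γ → ℕ) (c : ℕ) :
    (∀ x ∈ m, c ≤ g x) → Multiset.card m * c ≤ (m.map g).sum := by
  induction m using Multiset.induction with
  | empty => simp
  | cons a s ih =>
    intro h
    simp only [Multiset.map_cons, Multiset.sum_cons, Multiset.card_cons]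
    have h1 := h a (Multiset.mem_cons_self a s)
    have h2 := ih fun x hx => h x (Multiset.mem_cons_of_mem hx)
    have : (Multiset.card s + 1) * c = Multiset.card s * c + c := by ring
    omega

lemma st2_force_mult {γ : Type*} (m : Multiset γ) (g : γ → ℕ) (c : ℕ) :
    (∀ x ∈ m, c ≤ g x) → (m.map g).sum ≤ Multiset.card m * c → ∀ x ∈ m, g x = c := by
  induction m using Multiset.induction with
  | empty => intro _ _ x hx; simp at hx
  | cons a s ih =>
    intro h h2 x hx
    simp only [Multiset.map_cons, Multiset.sum_cons, Multiset.card_cons] at h2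
    have h1 := h a (Multiset.mem_cons_self a s)
    have hrest := st2_le_sum s g c fun x hx => h x (Multiset.mem_cons_of_mem hx)
    have hmul : (Multiset.card s + 1) * c = Multiset.card s * c + c := by ring
    rcases Multiset.mem_cons.mp hx with rfl | hx'
    · omega
    · exact ih (fun x hx => h x (Multiset.mem_cons_of_mem hx)) (by omega) x hx'

lemma st2_force_fin {β : Type*} (S : Finset β) (g : β → ℕ) (c : ℕ)
    (h : ∀ x ∈ S, g x ≤ c) (h2 : S.card * c ≤ ∑ x ∈ S, g x) : ∀ x ∈ S, g x = c := by
  by_contra hx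
  push_neg at hx
  obtain ⟨x₀, hx₀, hne⟩ := hx
  have hlt : g x₀ < c := lt_of_le_of_ne (h x₀ hx₀) hne
  have hsum : ∑ x ∈ S, g x < ∑ _x ∈ S, c := Finset.sum_lt_sum h ⟨x₀, hx₀, hlt⟩
  rw [Finset.sum_const, smul_eq_mul] at hsum
  omega

lemma st2_count_before {n k : ℕ} (hk : 1 ≤ k) (S T : Finset (Fin n)) (hS : S.card = k)
    (hT : T.card = k) (hST : Disjoint S T) :
    (Finset.univ.filter fun σ : Equiv.Perm (Fin n) => ∀ a ∈ S, ∀ b ∈ T, σ a < σ b).card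
      * (2 * k).choose k = Fintype.card (Equiv.Perm (Fin n)) := by
  classical
  set D := S ∪ T with hD
  have hDcard : D.card = 2 * k := by
    rw [hD, Finset.card_union_of_disjoint hST, hS, hT]; ring
  set rk : Equiv.Perm (Fin n) → Fin n → ℕ :=
    fun σ x => ((D.filter fun y => σ y < σ x)).card with hrk
  have hmono : ∀ (σ : Equiv.Perm (Fin n)) (x y : Fin n), x ∈ D → σ x < σ y →
      rk σ x < rk σ y := by
    intro σ x y hx hxy
    apply Finset.card_lt_card
    have hsub : (D.filter fun z => σ z < σ x) ⊆ (D.filter fun z => σ z < σ y) :=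
      Finset.monotone_filter_right D (fun z _ hz => hz.trans hxy)
    rw [Finset.ssubset_iff_of_subset hsub]
    exact ⟨x, Finset.mem_filter.mpr ⟨hx, hxy⟩, fun hmem =>
      absurd (Finset.mem_filter.mp hmem).2 (lt_irrefl _)⟩
  have hinj : ∀ σ : Equiv.Perm (Fin n), Set.InjOn (rk σ) D := by
    intro σ x hx y hy hxy
    by_contra hne
    have hσne : σ x ≠ σ y := fun h => hne (σ.injective h)
    rcases hσne.lt_or_gt with h | h
    · exact absurd hxy (hmono σ x y hx h).ne
    · exact absurd hxy.symm (hmono σ y x hy h).ne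
  have hrkim : ∀ σ : Equiv.Perm (Fin n), D.image (rk σ) = Finset.range (2 * k) := by
    intro σ
    apply Finset.eq_of_subset_of_card_le
    · intro r hr
      obtain ⟨x, hx, rfl⟩ := Finset.mem_image.mp hr
      rw [Finset.mem_range]
      have hle : rk σ x ≤ (D.erase x).card := by
        apply Finset.card_le_card
        intro z hz
        obtain ⟨hzD, hzlt⟩ := Finset.mem_filter.mp hz
        exact Finset.mem_erase.mpr ⟨fun h => absurd (h ▸ hzlt) (lt_irrefl _), hzD⟩
      rw [Finset.card_erase_of_mem hx, hDcard] at hle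
      omega
    · rw [Finset.card_range, Finset.card_image_of_injOn (hinj σ), hDcard]
  have hLcard : ∀ σ : Equiv.Perm (Fin n), (D.filter fun x => rk σ x < k).card = k := by
    intro σ
    have h2 : (D.filter fun x => rk σ x < k).card
        = ((D.filter fun x => rk σ x < k).image (rk σ)).card :=
      (Finset.card_image_of_injOn ((hinj σ).mono (by
        intro x hx
        exact (Finset.mem_filter.mp hx).1))).symm
    have h1 : (D.filter fun x => rk σ x < k).image (rk σ)
        = (D.image (rk σ)).filter (fun r => r < k) :=
      (Finset.filter_image (f := rk σ) (s := D) (p := fun r => r < k)).symm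
    have h3 : (Finset.range (2 * k)).filter (fun r => r < k) = Finset.range k := by
      ext r
      simp only [Finset.mem_filter, Finset.mem_range]
      omega
    rw [h2, h1, hrkim σ, h3, Finset.card_range]
  set Lset : Equiv.Perm (Fin n) → Finset (Fin n) :=
    fun σ => D.filter fun x => rk σ x < k with hLsetdef
  have hbef_iff : ∀ σ : Equiv.Perm (Fin n),
      (∀ a ∈ S, ∀ b ∈ T, σ a < σ b) ↔ Lset σ = S := by
    intro σ
    constructor
    · intro hbf
      have hsub : S ⊆ Lset σ := by
        intro a ha
        refine Finset.mem_filter.mpr ⟨Finset.mem_union_left _ ha, ?_⟩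
        have hle : rk σ a ≤ (S.erase a).card := by
          apply Finset.card_le_card
          intro z hz
          obtain ⟨hzD, hzlt⟩ := Finset.mem_filter.mp hz
          have hzS : z ∈ S := by
            rcases Finset.mem_union.mp hzD with h | h
            · exact h
            · exact absurd hzlt (not_lt.mpr (hbf a ha z h).le)
          exact Finset.mem_erase.mpr ⟨fun h => absurd (h ▸ hzlt) (lt_irrefl _), hzS⟩
        rw [Finset.card_erase_of_mem ha, hS] at hle
        omega
      exact (Finset.eq_of_subset_of_card_le hsub (by rw [hLcard σ, hS])).symm
    · intro hL a ha b hb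
      have haL : a ∈ Lset σ := hL.symm ▸ ha
      have hra : rk σ a < k := (Finset.mem_filter.mp haL).2
      have hrb : ¬ rk σ b < k := by
        intro hrb
        have hbL : b ∈ Lset σ := Finset.mem_filter.mpr ⟨Finset.mem_union_right _ hb, hrb⟩
        rw [hL] at hbL
        exact Finset.disjoint_left.mp hST hbL hb
      rcases lt_trichotomy (σ a) (σ b) with h | h | h
      · exact h
      · exact absurd (σ.injective h ▸ hb) (Finset.disjoint_left.mp hST ha)
      · exact absurd ((hmono σ b a (Finset.mem_union_right _ hb) h).trans hra) hrb
  have hclass : ∀ L ∈ D.powersetCard k,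
      (Finset.univ.filter fun σ : Equiv.Perm (Fin n) => Lset σ = L).card
        = (Finset.univ.filter fun σ : Equiv.Perm (Fin n) => Lset σ = S).card := by
    intro L hL
    obtain ⟨hLD, hLk⟩ := Finset.mem_powersetCard.mp hL
    have hcards : (L \ S).card = (S \ L).card := Finset.card_sdiff_comm (by rw [hLk, hS])
    set e := Finset.equivOfCardEq hcards with he
    set g : Fin n → Fin n := fun x =>
      if h : x ∈ L \ S then ↑(e ⟨x, h⟩) else if h : x ∈ S \ L then ↑(e.symm ⟨x, h⟩) else x
      with hgdef
    have hdis : ∀ x : Fin n, x ∈ S \ L → x ∉ L \ S := by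
      intro x h1 h2
      exact (Finset.mem_sdiff.mp h1).2 (Finset.mem_sdiff.mp h2).1
    have hg1 : ∀ (x : Fin n) (h : x ∈ L \ S), g x = ↑(e ⟨x, h⟩) := by
      intro x h; simp only [hgdef]; rw [dif_pos h]
    have hg2 : ∀ (x : Fin n) (h : x ∈ S \ L), g x = ↑(e.symm ⟨x, h⟩) := by
      intro x h
      simp only [hgdef]
      rw [dif_neg (hdis x h), dif_pos h]
    have hg3 : ∀ x : Fin n, x ∉ L \ S → x ∉ S \ L → g x = x := by
      intro x h1 h2; simp only [hgdef]; rw [dif_neg h1, dif_neg h2]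
    have hginv : Function.Involutive g := by
      intro x
      by_cases h1 : x ∈ L \ S
      · rw [hg1 x h1]
        have h2 : (↑(e ⟨x, h1⟩) : Fin n) ∈ S \ L := (e ⟨x, h1⟩).2
        rw [hg2 _ h2]
        have : (⟨↑(e ⟨x, h1⟩), h2⟩ : {y // y ∈ S \ L}) = e ⟨x, h1⟩ := Subtype.ext rfl
        rw [this, Equiv.symm_apply_apply]
      · by_cases h2 : x ∈ S \ L
        · rw [hg2 x h2]
          have h3 : (↑(e.symm ⟨x, h2⟩) : Fin n) ∈ L \ S := (e.symm ⟨x, h2⟩).2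
          rw [hg1 _ h3]
          have : (⟨↑(e.symm ⟨x, h2⟩), h3⟩ : {y // y ∈ L \ S}) = e.symm ⟨x, h2⟩ :=
            Subtype.ext rfl
          rw [this, Equiv.apply_symm_apply]
        · rw [hg3 x h1 h2, hg3 x h1 h2]
    have hgD : ∀ x : Fin n, g x ∈ D ↔ x ∈ D := by
      intro x
      by_cases h1 : x ∈ L \ S
      · rw [hg1 x h1]
        have h2 : (↑(e ⟨x, h1⟩) : Fin n) ∈ S \ L := (e ⟨x, h1⟩).2
        constructor
        · intro _; exact hLD (Finset.mem_sdiff.mp h1).1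
        · intro _; exact Finset.mem_union_left _ (Finset.mem_sdiff.mp h2).1
      · by_cases h2 : x ∈ S \ L
        · rw [hg2 x h2]
          have h3 : (↑(e.symm ⟨x, h2⟩) : Fin n) ∈ L \ S := (e.symm ⟨x, h2⟩).2
          constructor
          · intro _; exact Finset.mem_union_left _ (Finset.mem_sdiff.mp h2).1
          · intro _; exact hLD (Finset.mem_sdiff.mp h3).1
        · rw [hg3 x h1 h2]
    have hgL : ∀ x : Fin n, g x ∈ L ↔ x ∈ S := by
      intro x
      by_cases h1 : x ∈ L \ S
      · rw [hg1 x h1]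
        have h2 : (↑(e ⟨x, h1⟩) : Fin n) ∈ S \ L := (e ⟨x, h1⟩).2
        simp only [Finset.mem_sdiff] at h1 h2
        constructor
        · intro h; exact absurd h h2.2
        · intro h; exact absurd h h1.2
      · by_cases h2 : x ∈ S \ L
        · rw [hg2 x h2]
          have h3 : (↑(e.symm ⟨x, h2⟩) : Fin n) ∈ L \ S := (e.symm ⟨x, h2⟩).2
          simp only [Finset.mem_sdiff] at h2 h3
          constructor
          · intro _; exact h2.1
          · intro _; exact h3.1
        · rw [hg3 x h1 h2]
          simp only [Finset.mem_sdiff, not_and, not_not] at h1 h2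
          constructor
          · intro h; by_cases hxS : x ∈ S
            · exact hxS
            · exact absurd (h1 h) hxS
          · intro h; by_cases hxL : x ∈ L
            · exact hxL
            · exact absurd (h2 h) hxL
    have hgS : ∀ x : Fin n, g x ∈ S ↔ x ∈ L := by
      intro x
      by_cases h1 : x ∈ L \ S
      · rw [hg1 x h1]
        have h2 : (↑(e ⟨x, h1⟩) : Fin n) ∈ S \ L := (e ⟨x, h1⟩).2
        simp only [Finset.mem_sdiff] at h1 h2
        exact ⟨fun _ => h1.1, fun _ => h2.1⟩
      · by_cases h2 : x ∈ S \ L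
        · rw [hg2 x h2]
          have h3 : (↑(e.symm ⟨x, h2⟩) : Fin n) ∈ L \ S := (e.symm ⟨x, h2⟩).2
          simp only [Finset.mem_sdiff] at h2 h3
          exact ⟨fun h => absurd h h3.2, fun h => absurd h h2.2⟩
        · rw [hg3 x h1 h2]
          simp only [Finset.mem_sdiff, not_and, not_not] at h1 h2
          constructor
          · intro h; by_cases hxL : x ∈ L
            · exact hxL
            · exact absurd (h2 h) hxL
          · intro h; by_cases hxS : x ∈ S
            · exact hxS
            · exact absurd (h1 h) hxS
    set π : Equiv.Perm (Fin n) := Function.Involutive.toPerm g hginv with hπdef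
    have hπ : ∀ x, π x = g x := fun x => rfl
    have hrkg : ∀ (σ : Equiv.Perm (Fin n)) (x : Fin n), rk (σ * π) x = rk σ (g x) := by
      intro σ x
      show (D.filter fun y => (σ * π) y < (σ * π) x).card
        = (D.filter fun y => σ y < σ (g x)).card
      apply Finset.card_nbij' (i := g) (j := g)
      · intro z hz
        obtain ⟨hzD, hzlt⟩ := Finset.mem_filter.mp hz
        refine Finset.mem_filter.mpr ⟨(hgD z).mpr hzD, ?_⟩
        simpa only [Equiv.Perm.mul_apply, hπ] using hzlt
      · intro z hz
        obtain ⟨hzD, hzlt⟩ := Finset.mem_filter.mp hz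
        refine Finset.mem_filter.mpr ⟨(hgD z).mpr hzD, ?_⟩
        simp only [Equiv.Perm.mul_apply, hπ, hginv z]
        exact hzlt
      · intro a _; exact hginv a
      · intro a _; exact hginv a
    have hLπ1 : ∀ σ : Equiv.Perm (Fin n), Lset σ = L → Lset (σ * π) = S := by
      intro σ hσL
      ext x
      simp only [hLsetdef, Finset.mem_filter]
      constructor
      · rintro ⟨hxD, hlt⟩
        rw [hrkg σ x] at hlt
        have hgx : g x ∈ Lset σ := Finset.mem_filter.mpr ⟨(hgD x).mpr hxD, hlt⟩
        rw [hσL] at hgx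
        exact (hgL x).mp hgx
      · intro hxS
        have hxD : x ∈ D := Finset.mem_union_left _ hxS
        refine ⟨hxD, ?_⟩
        rw [hrkg σ x]
        have hgx : g x ∈ L := (hgL x).mpr hxS
        rw [← hσL] at hgx
        exact (Finset.mem_filter.mp hgx).2
    have hLπ2 : ∀ σ : Equiv.Perm (Fin n), Lset σ = S → Lset (σ * π) = L := by
      intro σ hσS
      ext x
      simp only [hLsetdef, Finset.mem_filter]
      constructor
      · rintro ⟨hxD, hlt⟩
        rw [hrkg σ x] at hlt
        have hgx : g x ∈ Lset σ := Finset.mem_filter.mpr ⟨(hgD x).mpr hxD, hlt⟩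
        rw [hσS] at hgx
        exact (hgS x).mp hgx
      · intro hxL
        have hxD : x ∈ D := hLD hxL
        refine ⟨hxD, ?_⟩
        rw [hrkg σ x]
        have hgx : g x ∈ S := (hgS x).mpr hxL
        rw [← hσS] at hgx
        exact (Finset.mem_filter.mp hgx).2
    have hππ : ∀ σ : Equiv.Perm (Fin n), σ * π * π = σ := by
      intro σ
      ext x
      simp only [Equiv.Perm.mul_apply, hπ, hginv x]
    apply Finset.card_nbij' (i := fun σ => σ * π) (j := fun σ => σ * π)
    · intro σ hσ
      exact Finset.mem_filter.mpr ⟨Finset.mem_univ _, hLπ1 σ (Finset.mem_filter.mp hσ).2⟩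
    · intro σ hσ
      exact Finset.mem_filter.mpr ⟨Finset.mem_univ _, hLπ2 σ (Finset.mem_filter.mp hσ).2⟩
    · intro σ _; exact hππ σ
    · intro σ _; exact hππ σ
  have hpart : Fintype.card (Equiv.Perm (Fin n))
      = ∑ L ∈ D.powersetCard k, (Finset.univ.filter fun σ => Lset σ = L).card := by
    rw [← Finset.card_univ]
    apply Finset.card_eq_sum_card_fiberwise
    intro σ _
    exact Finset.mem_powersetCard.mpr ⟨Finset.filter_subset _ _, hLcard σ⟩
  have hfinal : Fintype.card (Equiv.Perm (Fin n))
      = (2 * k).choose k * (Finset.univ.filter fun σ => Lset σ = S).card := by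
    rw [hpart, Finset.sum_congr rfl hclass, Finset.sum_const, Finset.card_powersetCard,
      hDcard, smul_eq_mul]
  have hfilter_eq : (Finset.univ.filter fun σ : Equiv.Perm (Fin n) =>
      ∀ a ∈ S, ∀ b ∈ T, σ a < σ b) = (Finset.univ.filter fun σ => Lset σ = S) :=
    Finset.filter_congr (fun σ _ => hbef_iff σ)
  rw [hfilter_eq, hfinal, Nat.mul_comm]

/-- If a `k`-uniform `[1,s]`-almost intersecting multihypergraph has
exactly `s * (2k choose k)` edges, then it is `[s,s]`-almost intersecting. -/
theorem stmt_2 {α : Type*} [DecidableEq α] (k s : ℕ) (hk : 1 ≤ k) (hs : 1 ≤ s)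
    (F : Multiset (Finset α))
    (huniform : ∀ A ∈ F, A.card = k)
    (hai : ∀ A ∈ F,
      1 ≤ Multiset.card (F.filter fun B => Disjoint A B) ∧
      Multiset.card (F.filter fun B => Disjoint A B) ≤ s)
    (hcard : Multiset.card F = s * Nat.choose (2 * k) k) :
    ∀ A ∈ F, Multiset.card (F.filter fun B => Disjoint A B) = s := by
  classical
  intro A₀ hA₀
  by_contra hne
  set C := Nat.choose (2 * k) k with hCdef
  have hCpos : 0 < C := Nat.choose_pos (by omega)
  -- ground set
  set Ω : Finset α := F.toFinset.biUnion id with hΩdef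
  have hsub : ∀ A ∈ F, A ⊆ Ω := by
    intro A hA x hx
    exact Finset.mem_biUnion.mpr ⟨A, Multiset.mem_toFinset.mpr hA, hx⟩
  have hedgene : ∀ A ∈ F, A.Nonempty := by
    intro A hA
    rw [← Finset.card_pos, huniform A hA]; omega
  have hn : 0 < Ω.card :=
    Finset.card_pos.mpr ⟨(hedgene A₀ hA₀).choose, hsub A₀ hA₀ (hedgene A₀ hA₀).choose_spec⟩
  set n := Ω.card with hndef
  set f : α → Fin n := fun a => if h : a ∈ Ω then Ω.equivFin ⟨a, h⟩ else ⟨0, hn⟩ with hfdef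
  have hf : ∀ {a : α} (h : a ∈ Ω), f a = Ω.equivFin ⟨a, h⟩ := by
    intro a h; simp only [hfdef]; rw [dif_pos h]
  have hfinj : ∀ {a b : α}, a ∈ Ω → b ∈ Ω → f a = f b → a = b := by
    intro a b ha hb hab
    rw [hf ha, hf hb] at hab
    have := Ω.equivFin.injective hab
    exact congrArg Subtype.val this
  have himcard : ∀ A ∈ F, (A.image f).card = k := by
    intro A hA
    rw [Finset.card_image_of_injOn fun x hx y hy =>
      hfinj (hsub A hA hx) (hsub A hA hy), huniform A hA]
  have hmemim : ∀ A ∈ F, ∀ {c : α}, c ∈ Ω → f c ∈ A.image f → c ∈ A := by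
    intro A hA c hcΩ hc
    obtain ⟨a, ha, hav⟩ := Finset.mem_image.mp hc
    rwa [← hfinj (hsub A hA ha) hcΩ hav]
  have himdisj : ∀ A ∈ F, ∀ B ∈ F, Disjoint A B → Disjoint (A.image f) (B.image f) := by
    intro A hA B hB hAB
    rw [Finset.disjoint_left]
    rintro x hx hx'
    obtain ⟨a, ha, rfl⟩ := Finset.mem_image.mp hx
    have haB : a ∈ B := hmemim B hB (hsub A hA ha) hx'
    exact Finset.disjoint_left.mp hAB ha haB
  -- basic predicates
  set bef : Equiv.Perm (Fin n) → Finset α → Finset α → Prop :=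
    fun σ A B => ∀ x ∈ A.image f, ∀ y ∈ B.image f, σ x < σ y with hbefdef
  have hbef_elem : ∀ (σ : Equiv.Perm (Fin n)) (A B : Finset α), bef σ A B →
      ∀ a ∈ A, ∀ b ∈ B, σ (f a) < σ (f b) := by
    intro σ A B h a ha b hb
    exact h _ (Finset.mem_image_of_mem f ha) _ (Finset.mem_image_of_mem f hb)
  set Q : Equiv.Perm (Fin n) → Finset α → Prop :=
    fun σ A => ∃ B ∈ F, Disjoint A B ∧ bef σ A B with hQdef
  set M : Equiv.Perm (Fin n) → ℕ := fun σ => Multiset.card (F.filter (Q σ)) with hMdef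
  set Y : Finset α → ℕ := fun A => (Finset.univ.filter fun σ => Q σ A).card with hYdef
  set N := Fintype.card (Equiv.Perm (Fin n)) with hNdef
  -- counting lemma
  have hcount : ∀ A ∈ F, ∀ B ∈ F, Disjoint A B →
      (Finset.univ.filter fun σ : Equiv.Perm (Fin n) => bef σ A B).card * C = N := by
    intro A hA B hB hAB
    exact st2_count_before hk (A.image f) (B.image f) (himcard A hA) (himcard B hB)
      (himdisj A hA B hB hAB)
  -- partner existence
  have hpartner : ∀ A ∈ F, ∃ B ∈ F, Disjoint A B := by
    intro A hA
    have h1 := (hai A hA).1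
    have h0 : F.filter (fun B => Disjoint A B) ≠ 0 := by
      intro h0; rw [h0] at h1; simp at h1
    obtain ⟨B, hB⟩ := Multiset.exists_mem_of_ne_zero h0
    exact ⟨B, Multiset.mem_of_mem_filter hB, Multiset.of_mem_filter hB⟩
  -- lower bound on Y
  have hYlow : ∀ A ∈ F, N ≤ Y A * C := by
    intro A hA
    obtain ⟨B, hB, hAB⟩ := hpartner A hA
    have hsub2 : (Finset.univ.filter fun σ : Equiv.Perm (Fin n) => bef σ A B)
        ⊆ (Finset.univ.filter fun σ => Q σ A) := by
      intro σ hσ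
      exact Finset.mem_filter.mpr ⟨Finset.mem_univ _,
        ⟨B, hB, hAB, (Finset.mem_filter.mp hσ).2⟩⟩
    calc N = (Finset.univ.filter fun σ : Equiv.Perm (Fin n) => bef σ A B).card * C :=
        (hcount A hA B hB hAB).symm
      _ ≤ Y A * C := Nat.mul_le_mul_right C (Finset.card_le_card hsub2)
  -- M σ ≤ s
  have hMle : ∀ σ : Equiv.Perm (Fin n), M σ ≤ s := by
    intro σ
    show Multiset.card (F.filter (Q σ)) ≤ s
    by_cases h0 : F.filter (Q σ) = 0
    · rw [h0]; simp
    obtain ⟨C₀, hC₀⟩ := Multiset.exists_mem_of_ne_zero h0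
    have hC₀F : C₀ ∈ F := Multiset.mem_of_mem_filter hC₀
    have hC₀Q : Q σ C₀ := Multiset.of_mem_filter hC₀
    set 𝒲 : Finset (Finset α) :=
      F.toFinset.filter (fun B => ∃ A ∈ F, Disjoint A B ∧ bef σ A B) with h𝒲def
    have h𝒲ne : 𝒲.Nonempty := by
      obtain ⟨B, hBF, hdj, hbf⟩ := hC₀Q
      exact ⟨B, Finset.mem_filter.mpr ⟨Multiset.mem_toFinset.mpr hBF, C₀, hC₀F, hdj, hbf⟩⟩
    obtain ⟨B₀, hB₀mem, hB₀max⟩ :=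
      Finset.exists_max_image 𝒲 (fun B => (B.image fun a => σ (f a)).min) h𝒲ne
    have hB₀F : B₀ ∈ F := Multiset.mem_toFinset.mp (Finset.mem_filter.mp hB₀mem).1
    have hkey : ∀ Cx ∈ F, Q σ Cx → Disjoint B₀ Cx := by
      intro Cx hCx hQx
      obtain ⟨B, hBF, hdj, hbf⟩ := hQx
      have hB𝒲 : B ∈ 𝒲 :=
        Finset.mem_filter.mpr ⟨Multiset.mem_toFinset.mpr hBF, Cx, hCx, hdj, hbf⟩
      rw [Finset.disjoint_right]
      intro c hc hcB₀
      have hBne : B.Nonempty := hedgene B hBF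
      have himne : (B.image fun a => σ (f a)).Nonempty := hBne.image _
      have hv : σ (f c) < (B.image fun a => σ (f a)).min' himne := by
        rw [Finset.lt_min'_iff]
        intro y hy
        obtain ⟨b, hbB, rfl⟩ := Finset.mem_image.mp hy
        exact hbef_elem σ Cx B hbf c hc b hbB
      have h1 : (B.image fun a => σ (f a)).min
          = ↑((B.image fun a => σ (f a)).min' himne) := (Finset.coe_min' himne).symm
      have h2 : (B.image fun a => σ (f a)).min ≤ (B₀.image fun a => σ (f a)).min :=
        hB₀max B hB𝒲
      have h3 : (B₀.image fun a => σ (f a)).min ≤ ↑(σ (f c)) :=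
        Finset.min_le (Finset.mem_image_of_mem _ hcB₀)
      have h4 : (↑((B.image fun a => σ (f a)).min' himne) : WithTop (Fin n)) ≤ ↑(σ (f c)) :=
        h1 ▸ (h2.trans h3)
      exact absurd hv (not_lt.mpr (WithTop.coe_le_coe.mp h4))
    have hmono := st2_card_filter_mono F (Q σ) (fun Cx => Disjoint B₀ Cx) hkey
    exact hmono.trans (hai B₀ hB₀F).2
  -- the double count
  have hswap : ∑ σ : Equiv.Perm (Fin n), M σ = (F.map Y).sum := st2_swap Finset.univ Q F
  have hup : (F.map Y).sum ≤ N * s := by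
    rw [← hswap]
    calc ∑ σ : Equiv.Perm (Fin n), M σ ≤ ∑ _σ : Equiv.Perm (Fin n), s :=
        Finset.sum_le_sum fun σ _ => hMle σ
      _ = N * s := by rw [Finset.sum_const, Finset.card_univ, smul_eq_mul]
  have hYC : (F.map fun A => Y A * C).sum = (F.map Y).sum * C := Multiset.sum_map_mul_right
  have hlow : s * C * N ≤ (F.map fun A => Y A * C).sum := by
    have := st2_le_sum F (fun A => Y A * C) N hYlow
    rwa [hcard] at this
  -- equality everywhere
  have hsumYC : (F.map fun A => Y A * C).sum = s * C * N := by
    apply le_antisymm _ hlow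
    rw [hYC]
    calc (F.map Y).sum * C ≤ N * s * C := Nat.mul_le_mul_right C hup
      _ = s * C * N := by ring
  have hYeq : ∀ A ∈ F, Y A * C = N := by
    apply st2_force_mult F (fun A => Y A * C) N hYlow
    rw [hsumYC, hcard]
  have hMeq : ∀ σ : Equiv.Perm (Fin n), M σ = s := by
    have hsumY : (F.map Y).sum = s * N := by
      have h1 : (F.map Y).sum * C = s * N * C := by
        rw [← hYC, hsumYC]; ring
      exact Nat.eq_of_mul_eq_mul_right hCpos h1
    have htot : ∑ σ : Equiv.Perm (Fin n), M σ = N * s := by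
      rw [hswap, hsumY]; ring
    intro σ
    apply st2_force_fin Finset.univ M s (fun σ _ => hMle σ) _ σ (Finset.mem_univ σ)
    rw [htot, Finset.card_univ]
  -- Step 1: all partners of a fixed edge are equal as sets
  have huniq : ∀ A ∈ F, ∀ B ∈ F, ∀ B' ∈ F, Disjoint A B → Disjoint A B' → B = B' := by
    intro A hA B hB B' hB' h1 h2
    by_contra hBB'
    have hYA : Y A = (Finset.univ.filter fun σ : Equiv.Perm (Fin n) => bef σ A B).card :=
      Nat.eq_of_mul_eq_mul_right hCpos (by rw [hYeq A hA, hcount A hA B hB h1])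
    have hBd : (B \ B').Nonempty := by
      rw [Finset.sdiff_nonempty]
      intro hsub'
      exact hBB' (Finset.eq_of_subset_of_card_le hsub'
        (by rw [huniform B hB, huniform B' hB']))
    obtain ⟨b, hbmem⟩ := hBd
    obtain ⟨hbB, hbB'⟩ := Finset.mem_sdiff.mp hbmem
    obtain ⟨σ₀, hσ₀⟩ := st2_sort_key
      (fun x => if x = f b then 0 else if x ∈ A.image f then 1 else
        if x ∈ B'.image f then 2 else 3)
    have hbA : b ∉ A := fun hbA => Finset.disjoint_left.mp h1 hbA hbB
    have hbef' : bef σ₀ A B' := by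
      intro x hx y hy
      apply hσ₀
      obtain ⟨a, ha, rfl⟩ := Finset.mem_image.mp hx
      obtain ⟨b', hb', rfl⟩ := Finset.mem_image.mp hy
      have hfa : f a ≠ f b := fun h =>
        hbA (hfinj (hsub A hA ha) (hsub B hB hbB) h ▸ ha)
      have hfb' : f b' ≠ f b := fun h =>
        hbB' (hfinj (hsub B' hB' hb') (hsub B hB hbB) h ▸ hb')
      have hb'A : f b' ∉ A.image f := fun h =>
        Finset.disjoint_left.mp h2 (hmemim A hA (hsub B' hB' hb') h) hb'
      rw [if_neg hfa, if_pos (Finset.mem_image_of_mem f ha), if_neg hfb', if_neg hb'A,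
        if_pos (Finset.mem_image_of_mem f hb')]
      omega
    have hnotbef : ¬ bef σ₀ A B := by
      intro hbf
      obtain ⟨a₀, ha₀⟩ := hedgene A hA
      have hfa : f a₀ ≠ f b := fun h =>
        hbA (hfinj (hsub A hA ha₀) (hsub B hB hbB) h ▸ ha₀)
      have h01 : σ₀ (f b) < σ₀ (f a₀) := by
        apply hσ₀
        rw [if_pos rfl, if_neg hfa, if_pos (Finset.mem_image_of_mem f ha₀)]
        omega
      exact absurd (hbef_elem σ₀ A B hbf a₀ ha₀ b hbB) (not_lt.mpr h01.le)
    have hss : (Finset.univ.filter fun σ : Equiv.Perm (Fin n) => bef σ A B)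
        ⊂ (Finset.univ.filter fun σ => Q σ A) := by
      rw [Finset.ssubset_iff_of_subset]
      · refine ⟨σ₀, Finset.mem_filter.mpr ⟨Finset.mem_univ _, ⟨B', hB', h2, hbef'⟩⟩, ?_⟩
        intro hmem
        exact hnotbef (Finset.mem_filter.mp hmem).2
      · intro σ hσ
        exact Finset.mem_filter.mpr ⟨Finset.mem_univ _,
          ⟨B, hB, h1, (Finset.mem_filter.mp hσ).2⟩⟩
    have := Finset.card_lt_card hss
    rw [← hYA] at this
    exact absurd this (lt_irrefl _)
  -- Step 2: the contradiction
  have hd : Multiset.card (F.filter fun B => Disjoint A₀ B) < s :=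
    lt_of_le_of_ne (hai A₀ hA₀).2 hne
  obtain ⟨B₁, hB₁, hdisj₁⟩ := hpartner A₀ hA₀
  have huniq1 : ∀ Cx ∈ F, Disjoint A₀ Cx → Cx = B₁ := fun Cx hCx h =>
    huniq A₀ hA₀ Cx hCx B₁ hB₁ h hdisj₁
  have huniq2 : ∀ Cx ∈ F, Disjoint B₁ Cx → Cx = A₀ := fun Cx hCx h =>
    huniq B₁ hB₁ Cx hCx A₀ hA₀ h hdisj₁.symm
  obtain ⟨σ₁, hσ₁⟩ := st2_sort_key
    (fun x => if x ∈ B₁.image f then 0 else if x ∈ A₀.image f then 1 else 2)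
  have hclaim : ∀ Cx ∈ F, Q σ₁ Cx → Cx = B₁ := by
    intro Cx hCx hQx
    obtain ⟨B, hBF, hCB, hbf⟩ := hQx
    have hcards : B₁.card ≤ Cx.card := by rw [huniform B₁ hB₁, huniform Cx hCx]
    have hBB₁ : Disjoint B B₁ := by
      by_contra hnd
      rw [Finset.not_disjoint_iff] at hnd
      obtain ⟨x, hxB, hxB₁⟩ := hnd
      have hCsub : Cx ⊆ B₁ := by
        intro c hc
        by_contra hcB₁
        have hfc : f c ∉ B₁.image f := fun h => hcB₁ (hmemim B₁ hB₁ (hsub Cx hCx hc) h)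
        have hlt : σ₁ (f x) < σ₁ (f c) := by
          apply hσ₁
          rw [if_pos (Finset.mem_image_of_mem f hxB₁), if_neg hfc]
          split_ifs <;> omega
        exact absurd (hbef_elem σ₁ Cx B hbf c hc x hxB) (not_lt.mpr hlt.le)
      have hCeq : Cx = B₁ := Finset.eq_of_subset_of_card_le hCsub hcards
      exact Finset.disjoint_left.mp hCB (hCeq ▸ hxB₁) hxB
    have hBA₀ : B = A₀ := huniq2 B hBF hBB₁.symm
    subst hBA₀
    have hCsub : Cx ⊆ B₁ := by
      intro c hc
      by_contra hcB₁
      have hfc : f c ∉ B₁.image f := fun h => hcB₁ (hmemim B₁ hB₁ (hsub Cx hCx hc) h)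
      have hcA₀ : c ∉ B := Finset.disjoint_left.mp hCB hc
      have hfc2 : f c ∉ B.image f := fun h => hcA₀ (hmemim B hBF (hsub Cx hCx hc) h)
      obtain ⟨a₀, ha₀⟩ := hedgene B hBF
      have hfa : f a₀ ∉ B₁.image f := by
        intro h
        have ha₀B₁ : a₀ ∈ B₁ := hmemim B₁ hB₁ (hsub B hBF ha₀) h
        exact Finset.disjoint_left.mp hdisj₁ ha₀ ha₀B₁
      have hlt : σ₁ (f a₀) < σ₁ (f c) := by
        apply hσ₁
        rw [if_neg hfa, if_pos (Finset.mem_image_of_mem f ha₀), if_neg hfc, if_neg hfc2]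
        omega
      exact absurd (hbef_elem σ₁ Cx B hbf c hc a₀ ha₀) (not_lt.mpr hlt.le)
    exact Finset.eq_of_subset_of_card_le hCsub hcards
  have hMs : M σ₁ = s := hMeq σ₁
  have hle1 : M σ₁ ≤ Multiset.card (F.filter fun Cx => Cx = B₁) :=
    st2_card_filter_mono F (Q σ₁) (fun Cx => Cx = B₁) hclaim
  have heq2 : F.filter (fun Cx => Cx = B₁) = F.filter (fun B => Disjoint A₀ B) :=
    Multiset.filter_congr fun Cx hCx =>
      ⟨fun h => h ▸ hdisj₁, fun h => huniq1 Cx hCx h⟩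
  rw [heq2] at hle1
  omega
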